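/- For the generalized Gaussian family with β even, the skewness tensor component T₁₁₂ = E[(∂_μ l)²(∂_σ l)] equals (1/σ³)·(Γ((3β−1)/β)β³ − Γ((2β−1)/β)β²)/Γ(1/β). -/

import Mathlib

open MeasureTheory

/-- The generalized Gaussian density. -/
noncomputable def genGaussPdf (β : ℕ) (μ σ x : ℝ) : ℝ :=
  (β : ℝ) / (2 * σ * Real.Gamma (1 / (β : ℝ))) * Real.exp (-(x - μ) ^ β / σ ^ β)

/-- The log-likelihood `l = log f`. -/
noncomputable def genGaussLogLik (β : ℕ) (μ σ x : ℝ) : ℝ :=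
  Real.log (genGaussPdf β μ σ x)

section helpers
open Real Set


lemma ggIntegrable {k β : ℕ} (hβ : 2 ≤ β) (hk : Even k) (hβe : Even β) {σ : ℝ} (hσ : 0 < σ) :
    Integrable (fun y : ℝ => y ^ k * Real.exp (-y ^ β / σ ^ β)) := by
  have hb : (0:ℝ) < (σ ^ β)⁻¹ := by positivity
  have hβ1 : (1:ℝ) ≤ (β:ℝ) := by exact_mod_cast hβ.trans' one_le_two
  have hk1 : (-1:ℝ) < (k:ℝ) := lt_of_lt_of_le neg_one_lt_zero (Nat.cast_nonneg k)
  have hfun : (fun y : ℝ => y ^ k * Real.exp (-y ^ β / σ ^ β))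
      = fun y : ℝ => y ^ (k:ℝ) * Real.exp (-(σ ^ β)⁻¹ * y ^ (β:ℝ)) := by
    funext y
    rw [Real.rpow_natCast, Real.rpow_natCast]
    ring_nf
  rw [hfun]
  have hIoi : IntegrableOn (fun y : ℝ => y ^ (k:ℝ) * Real.exp (-(σ ^ β)⁻¹ * y ^ (β:ℝ))) (Ioi 0) :=
    integrableOn_rpow_mul_exp_neg_mul_rpow hk1 (by linarith) hb
  have heven : ∀ y : ℝ, (-y) ^ (k:ℝ) * Real.exp (-(σ ^ β)⁻¹ * (-y) ^ (β:ℝ))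
      = y ^ (k:ℝ) * Real.exp (-(σ ^ β)⁻¹ * y ^ (β:ℝ)) := by
    intro y
    rw [Real.rpow_natCast, Real.rpow_natCast, Real.rpow_natCast, Real.rpow_natCast,
      hk.neg_pow, hβe.neg_pow]
  have A : MeasurableEmbedding (fun x : ℝ => -x) :=
    (Homeomorph.neg ℝ).isClosedEmbedding.measurableEmbedding
  have hIic : IntegrableOn (fun y : ℝ => y ^ (k:ℝ) * Real.exp (-(σ ^ β)⁻¹ * y ^ (β:ℝ))) (Iic 0) := by
    have hmap : (volume : Measure ℝ).restrict (Iic 0)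
        = Measure.map (fun x : ℝ => -x) ((volume : Measure ℝ).restrict (Ici 0)) := by
      rw [show (volume : Measure ℝ) = Measure.map (fun x : ℝ => -x) volume from
        (Measure.map_neg_eq_self _).symm]
      rw [Measure.restrict_map A.measurable measurableSet_Iic]
      congr 1
      ext x
      simp
    rw [IntegrableOn, hmap, A.integrable_map_iff]
    simp only [Function.comp_def, heven]
    exact (integrableOn_Ici_iff_integrableOn_Ioi).mpr hIoi
  have := hIic.union hIoi
  rw [Iic_union_Ioi] at this
  exact integrableOn_univ.mp this

lemma ggMoment {k β : ℕ} (hβ : 2 ≤ β) (hk : Even k) (hβe : Even β) {σ : ℝ} (hσ : 0 < σ) :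
    ∫ y : ℝ, y ^ k * Real.exp (-y ^ β / σ ^ β)
      = 2 * σ ^ (k + 1) * (1 / (β:ℝ)) * Real.Gamma (((k:ℝ) + 1) / (β:ℝ)) := by
  have hb : (0:ℝ) < (σ ^ β)⁻¹ := by positivity
  have hβ1 : (1:ℝ) ≤ (β:ℝ) := by exact_mod_cast hβ.trans' one_le_two
  have hβ0 : ((β:ℝ)) ≠ 0 := by positivity
  have hk1 : (-1:ℝ) < (k:ℝ) := lt_of_lt_of_le neg_one_lt_zero (Nat.cast_nonneg k)
  have habs : (fun y : ℝ => y ^ k * Real.exp (-y ^ β / σ ^ β))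
      = fun y : ℝ => (fun t : ℝ => t ^ k * Real.exp (-t ^ β / σ ^ β)) |y| := by
    funext y
    simp only [hk.pow_abs, hβe.pow_abs]
  rw [habs, integral_comp_abs (f := fun t : ℝ => t ^ k * Real.exp (-t ^ β / σ ^ β))]
  have h2 : ∫ t in Ioi (0:ℝ), t ^ k * Real.exp (-t ^ β / σ ^ β)
      = ∫ t in Ioi (0:ℝ), t ^ (k:ℝ) * Real.exp (-(σ ^ β)⁻¹ * t ^ (β:ℝ)) := by
    refine setIntegral_congr_fun measurableSet_Ioi (fun t ht => ?_)
    rw [Real.rpow_natCast, Real.rpow_natCast]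
    ring_nf
  rw [h2, integral_rpow_mul_exp_neg_mul_rpow (by positivity) hk1 hb]
  have hpow : ((σ ^ β)⁻¹ : ℝ) ^ (-((k:ℝ) + 1) / (β:ℝ)) = σ ^ (k + 1) := by
    rw [show ((σ ^ β)⁻¹ : ℝ) = σ ^ (-(β:ℝ)) by
      rw [Real.rpow_neg hσ.le, Real.rpow_natCast]]
    rw [← Real.rpow_natCast σ (k+1), ← Real.rpow_mul hσ.le]
    congr 1
    push_cast
    field_simp
  rw [hpow]
  ring


lemma ggLogLik_eq {β : ℕ} (hβ : 0 < β) {s : ℝ} (hs : 0 < s) (m x : ℝ) :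
    genGaussLogLik β m s x
      = Real.log ((β:ℝ) / (2 * s * Real.Gamma (1 / (β:ℝ)))) + -(x - m) ^ β / s ^ β := by
  have hΓ : 0 < Real.Gamma (1 / (β:ℝ)) := Real.Gamma_pos_of_pos (by positivity)
  have hc : (0:ℝ) < (β:ℝ) / (2 * s * Real.Gamma (1 / (β:ℝ))) :=
    div_pos (by exact_mod_cast hβ) (by positivity)
  unfold genGaussLogLik genGaussPdf
  rw [Real.log_mul hc.ne' (Real.exp_ne_zero _), Real.log_exp]

lemma ggDerivMu {β : ℕ} (hβ : 0 < β) {σ : ℝ} (hσ : 0 < σ) (μ x : ℝ) :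
    deriv (fun m => genGaussLogLik β m σ x) μ = (β:ℝ) * (x - μ) ^ (β - 1) / σ ^ β := by
  have hfun : (fun m => genGaussLogLik β m σ x)
      = fun m => Real.log ((β:ℝ) / (2 * σ * Real.Gamma (1 / (β:ℝ)))) + -(x - m) ^ β / σ ^ β :=
    funext fun m => ggLogLik_eq hβ hσ m x
  rw [hfun]
  have h1 : HasDerivAt (fun m : ℝ => x - m) (-1) μ := by
    exact (hasDerivAt_id μ).const_sub x
  have h2 := (h1.pow β).div_const (σ ^ β)
  have h3 := (h2.neg.const_add (Real.log ((β:ℝ) / (2 * σ * Real.Gamma (1 / (β:ℝ))))))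
  have h4 : (fun m : ℝ => Real.log ((β:ℝ) / (2 * σ * Real.Gamma (1 / (β:ℝ))))
      + -((x - m) ^ β / σ ^ β)) = fun m => Real.log ((β:ℝ) / (2 * σ * Real.Gamma (1 / (β:ℝ))))
      + -(x - m) ^ β / σ ^ β := by
    funext m; rw [neg_div]
  replace h3 : HasDerivAt (fun m => Real.log ((β:ℝ) / (2 * σ * Real.Gamma (1 / (β:ℝ)))) + -(x - m) ^ β / σ ^ β) (-(↑β * (x - μ) ^ (β - 1) * -1 / σ ^ β)) μ := by
    rw [← h4]; exact h3
  rw [h3.deriv]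
  field_simp

lemma ggDerivSigma {β : ℕ} (hβ : 0 < β) {σ : ℝ} (hσ : 0 < σ) (μ x : ℝ) :
    deriv (fun s => genGaussLogLik β μ s x) σ
      = -1 / σ + (β:ℝ) * (x - μ) ^ β / σ ^ (β + 1) := by
  have hΓ : 0 < Real.Gamma (1 / (β:ℝ)) := Real.Gamma_pos_of_pos (by positivity)
  have hβ0 : ((β:ℝ)) ≠ 0 := by positivity
  set C : ℝ := (β:ℝ) / (2 * Real.Gamma (1 / (β:ℝ))) with hC
  set A : ℝ := (x - μ) ^ β with hA
  have hev : (fun s => genGaussLogLik β μ s x)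
      =ᶠ[nhds σ] fun s => Real.log C - Real.log s - A * (s ^ β)⁻¹ := by
    filter_upwards [Ioi_mem_nhds hσ] with s hs
    rw [ggLogLik_eq hβ hs μ x]
    have hCs : (β:ℝ) / (2 * s * Real.Gamma (1 / (β:ℝ))) = C / s := by
      rw [hC]; field_simp
    rw [hCs, Real.log_div (by positivity) (ne_of_gt hs)]
    simp only [hA]
    ring
  rw [hev.deriv_eq]
  have h1 : HasDerivAt (fun s : ℝ => Real.log C - Real.log s) (0 - σ⁻¹) σ :=
    (hasDerivAt_const σ (Real.log C)).sub (Real.hasDerivAt_log hσ.ne')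
  have h2 : HasDerivAt (fun s : ℝ => s ^ β) ((β:ℝ) * σ ^ (β - 1)) σ := hasDerivAt_pow β σ
  have h3 := (h2.inv (pow_ne_zero β hσ.ne')).const_mul A
  have h4 := h1.sub h3
  rw [show (fun s => Real.log C - Real.log s - A * (s ^ β)⁻¹) = ((fun s : ℝ => Real.log C - Real.log s) - fun y => A * (fun s : ℝ => s ^ β)⁻¹ y) from rfl, h4.deriv]
  obtain ⟨n, rfl⟩ : ∃ n, β = n + 1 := ⟨β - 1, (Nat.succ_pred_eq_of_pos hβ).symm⟩
  simp only [Nat.add_sub_cancel]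
  field_simp
  ring

end helpers

open Real Set in
theorem generalized_gaussian_T112
    (β : ℕ) (hβeven : Even β) (hβpos : 0 < β) (μ σ : ℝ) (hσ : 0 < σ) :
    ∫ x : ℝ, (deriv (fun m => genGaussLogLik β m σ x) μ) ^ 2
        * (deriv (fun s => genGaussLogLik β μ s x) σ) * genGaussPdf β μ σ x
      = (1 / σ ^ 3) * ((Real.Gamma ((3 * (β : ℝ) - 1) / (β : ℝ)) * (β : ℝ) ^ 3
          - Real.Gamma ((2 * (β : ℝ) - 1) / (β : ℝ)) * (β : ℝ) ^ 2)
        / Real.Gamma (1 / (β : ℝ))) := by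
  obtain ⟨c, hc⟩ := hβeven
  obtain ⟨d, rfl⟩ : ∃ d, c = d + 1 := ⟨c - 1, by omega⟩
  subst hc
  set β : ℕ := (d + 1) + (d + 1) with hβ
  have hβ2 : 2 ≤ β := by omega
  have hβe : Even β := ⟨d + 1, rfl⟩
  have hΓ : 0 < Real.Gamma (1 / (β:ℝ)) := Real.Gamma_pos_of_pos (by positivity)
  have hβ0 : ((β:ℝ)) ≠ 0 := by positivity
  set Γ₀ : ℝ := Real.Gamma (1 / (β:ℝ)) with hΓ₀
  set c1 : ℝ := (β:ℝ) ^ 4 / (2 * Γ₀ * σ ^ (6 * d + 8)) with hc1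
  set c2 : ℝ := -((β:ℝ) ^ 3) / (2 * Γ₀ * σ ^ (4 * d + 6)) with hc2
  have key : (fun x : ℝ => (deriv (fun m => genGaussLogLik β m σ x) μ) ^ 2
        * (deriv (fun s => genGaussLogLik β μ s x) σ) * genGaussPdf β μ σ x)
      = fun x : ℝ => (fun y : ℝ => c1 * (y ^ (6 * d + 4) * Real.exp (-y ^ β / σ ^ β))
          + c2 * (y ^ (4 * d + 2) * Real.exp (-y ^ β / σ ^ β))) (x - μ) := by
    funext x
    rw [ggDerivMu (by omega) hσ μ x, ggDerivSigma (by omega) hσ μ x]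
    unfold genGaussPdf
    rw [show β - 1 = 2 * d + 1 from by omega, hc1, hc2, ← hΓ₀]
    have hβd : β = 2 * d + 2 := by omega
    rw [hβd]
    field_simp
    ring
  rw [key, integral_sub_right_eq_self (fun y : ℝ => c1 * (y ^ (6 * d + 4)
      * Real.exp (-y ^ β / σ ^ β)) + c2 * (y ^ (4 * d + 2) * Real.exp (-y ^ β / σ ^ β))) μ]
  rw [integral_add ((ggIntegrable hβ2 ⟨3 * d + 2, by ring⟩ hβe hσ).const_mul c1)
      ((ggIntegrable hβ2 ⟨2 * d + 1, by ring⟩ hβe hσ).const_mul c2),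
    integral_const_mul, integral_const_mul,
    ggMoment hβ2 ⟨3 * d + 2, by ring⟩ hβe hσ, ggMoment hβ2 ⟨2 * d + 1, by ring⟩ hβe hσ]
  rw [show ((6 * d + 4 : ℕ):ℝ) + 1 = 3 * (β:ℝ) - 1 from by push_cast [hβ]; ring,
    show ((4 * d + 2 : ℕ):ℝ) + 1 = 2 * (β:ℝ) - 1 from by push_cast [hβ]; ring]
  rw [hc1, hc2]
  have hβr : (β:ℝ) = 2 * (d:ℝ) + 2 := by push_cast [hβ]; ring
  field_simp
  ring
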